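/- Theorem (diameter bound). Assume J is nonempty. For every x in the sequence-form polytope Q, the dilatable global entropy satisfies 0 ≤ φ̃(x) ≤ M_Q² · max_{j∈J} log|A_j|, where M_Q := max_{x∈Q} ‖x‖₁. Consequently, the φ̃-range max_{x∈Q} φ̃(x) − min_{x∈Q} φ̃(x) of Q is at most M_Q² · max_{j∈J} log|A_j|. -/

import Mathlib

open Finset



section Aux

variable {J : Type} [Fintype J] [DecidableEq J]
  {A : J → Type} [∀ j, Fintype (A j)] [∀ j, DecidableEq (A j)] [∀ j, Nonempty (A j)]

/-- Partition of a sum over `J` by parent sequence. -/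
lemma dge_sum_partition (p : J → Option ((j : J) × A j)) (F : J → ℝ) :
    ∑ j', F j' = (∑ j' ∈ Finset.univ.filter (fun j' => p j' = none), F j')
      + ∑ j : J, ∑ a : A j,
          ∑ j' ∈ Finset.univ.filter (fun j' => p j' = some ⟨j, a⟩), F j' := by
  classical
  have h := Finset.sum_fiberwise_of_maps_to
    (s := (Finset.univ : Finset J)) (t := (Finset.univ : Finset (Option ((j : J) × A j))))
    (g := p) (fun i _ => Finset.mem_univ _) F
  rw [← h, Fintype.sum_option]
  congr 1
  rw [← Finset.univ_sigma_univ, Finset.sum_sigma]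

/-- The weights are at least 1. -/
lemma dge_gamma_ge_one (p : J → Option ((j : J) × A j))
    (hwf : WellFounded (fun j' j : J => ∃ a : A j, p j' = some ⟨j, a⟩))
    (γ : J → ℝ)
    (hγ : ∀ j : J, γ j = 1 + (Finset.univ : Finset (A j)).sup' Finset.univ_nonempty
        (fun a => ∑ j' ∈ Finset.univ.filter (fun j' => p j' = some ⟨j, a⟩), γ j')) :
    ∀ j : J, 1 ≤ γ j := by
  intro j
  induction j using WellFounded.induction hwf with
  | _ j ih =>
    rw [hγ j]
    have ha : ∀ a : A j,
        0 ≤ ∑ j' ∈ Finset.univ.filter (fun j' => p j' = some ⟨j, a⟩), γ j' := by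
      intro a
      refine Finset.sum_nonneg fun j' hj' => ?_
      have := ih j' ⟨a, (Finset.mem_filter.mp hj').2⟩
      linarith
    have := Finset.le_sup' (f := fun a : A j =>
      ∑ j' ∈ Finset.univ.filter (fun j' => p j' = some ⟨j, a⟩), γ j')
      (Finset.mem_univ (Classical.arbitrary (A j)))
    have h0 := ha (Classical.arbitrary (A j))
    linarith

/-- Upper bound: `∑ x_a log x_a ≤ s log s`. -/
lemma dge_entropy_upper {α : Type} [Fintype α] (x : α → ℝ) (hx : ∀ a, 0 ≤ x a) :
    ∑ a, x a * Real.log (x a) ≤ (∑ a, x a) * Real.log (∑ a, x a) := by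
  classical
  set s := ∑ a, x a with hs
  have hs0 : 0 ≤ s := Finset.sum_nonneg fun a _ => hx a
  calc ∑ a, x a * Real.log (x a) ≤ ∑ a, x a * Real.log s := by
        refine Finset.sum_le_sum fun a _ => ?_
        rcases eq_or_lt_of_le (hx a) with h | h
        · simp [← h]
        · have hxa_le : x a ≤ s := Finset.single_le_sum (fun a _ => hx a) (Finset.mem_univ a)
          exact mul_le_mul_of_nonneg_left (Real.log_le_log (by positivity) hxa_le) (hx a)
    _ = s * Real.log s := by rw [← Finset.sum_mul]

/-- Lower bound (log-sum inequality): `0 ≤ s log n + ∑ x_a log x_a − s log s`. -/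
lemma dge_entropy_lower {α : Type} [Fintype α] [Nonempty α] (x : α → ℝ) (hx : ∀ a, 0 ≤ x a) :
    0 ≤ (∑ a, x a) * Real.log (Fintype.card α)
        + ∑ a, x a * Real.log (x a) - (∑ a, x a) * Real.log (∑ a, x a) := by
  classical
  set s := ∑ a, x a with hs
  have hs0 : 0 ≤ s := Finset.sum_nonneg fun a _ => hx a
  rcases eq_or_lt_of_le hs0 with h0 | hspos
  · have hz : ∀ a ∈ (Finset.univ : Finset α), x a = 0 :=
      (Finset.sum_eq_zero_iff_of_nonneg (fun a _ => hx a)).mp h0.symm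
    have : ∑ a, x a * Real.log (x a) = 0 :=
      Finset.sum_eq_zero fun a ha => by rw [hz a ha]; ring
    rw [this, ← h0]; ring_nf; exact le_refl _
  · have hn : (0 : ℝ) < Fintype.card α := by
      have := Fintype.card_pos (α := α); exact_mod_cast this
    have key : ∀ a : α, x a - s / Fintype.card α
        ≤ x a * Real.log (x a) - x a * Real.log s + x a * Real.log (Fintype.card α) := by
      intro a
      rcases eq_or_lt_of_le (hx a) with h | hxa
      · rw [← h]; simp; positivity
      · set t : ℝ := x a * Fintype.card α / s with ht
        have htpos : 0 < t := by positivity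
        have hlog : 1 - t⁻¹ ≤ Real.log t := Real.one_sub_inv_le_log_of_pos htpos
        have hlogt : Real.log t = Real.log (x a) + Real.log (Fintype.card α) - Real.log s := by
          rw [ht, Real.log_div (by positivity) (by positivity),
            Real.log_mul (by positivity) (by positivity)]
        have hinv : x a * t⁻¹ = s / Fintype.card α := by
          rw [ht]; field_simp
        have := mul_le_mul_of_nonneg_left hlog (hx a)
        rw [hlogt] at this
        calc x a - s / Fintype.card α = x a * (1 - t⁻¹) := by rw [mul_sub, mul_one, hinv]
          _ ≤ x a * (Real.log (x a) + Real.log (Fintype.card α) - Real.log s) := this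
          _ = x a * Real.log (x a) - x a * Real.log s + x a * Real.log (Fintype.card α) := by ring
    have hsum := Finset.sum_le_sum (s := (Finset.univ : Finset α)) (fun a _ => key a)
    have hL : ∑ a : α, (x a - s / Fintype.card α) = 0 := by
      rw [Finset.sum_sub_distrib, ← hs, Finset.sum_const, Finset.card_univ, nsmul_eq_mul]
      field_simp
      ring
    have hR : ∑ a : α, (x a * Real.log (x a) - x a * Real.log s + x a * Real.log (Fintype.card α))
        = ∑ a, x a * Real.log (x a) - s * Real.log s + s * Real.log (Fintype.card α) := by
      rw [Finset.sum_add_distrib, Finset.sum_sub_distrib, ← Finset.sum_mul, ← Finset.sum_mul, ← hs]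
    rw [hL, hR] at hsum
    linarith


/-- The flipped (parent) relation is well-founded. -/
lemma dge_flip_wf (p : J → Option ((j : J) × A j))
    (hwf : WellFounded (fun j' j : J => ∃ a : A j, p j' = some ⟨j, a⟩)) :
    WellFounded (fun j k : J => ∃ a : A j, p k = some ⟨j, a⟩) := by
  classical
  set r : J → J → Prop := fun j' j => ∃ a : A j, p j' = some ⟨j, a⟩ with hr
  have htg : WellFounded (Relation.TransGen r) := hwf.transGen
  have hirr : ∀ j, ¬ Relation.TransGen r j j := fun j h => htg.asymmetric j j h h
  haveI : IsTrans J (fun j k : J => Relation.TransGen r k j) :=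
    ⟨fun a b c hab hbc => Relation.TransGen.trans hbc hab⟩
  haveI : IsIrrefl J (fun j k : J => Relation.TransGen r k j) := ⟨fun a h => hirr a h⟩
  have hwfflip : WellFounded (fun j k : J => Relation.TransGen r k j) :=
    Finite.wellFounded_of_trans_of_irrefl _
  exact Subrelation.wf (fun {j k} h => Relation.TransGen.single h) hwfflip

/-- Existence of a greedy strategy whose `ℓ¹` norm is `γ0`. -/
lemma dge_exists_greedy (p : J → Option ((j : J) × A j))
    (hwf : WellFounded (fun j' j : J => ∃ a : A j, p j' = some ⟨j, a⟩))
    (γ : J → ℝ) (γ0 : ℝ)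
    (hγ : ∀ j : J, γ j = 1 + (Finset.univ : Finset (A j)).sup' Finset.univ_nonempty
        (fun a => ∑ j' ∈ Finset.univ.filter (fun j' => p j' = some ⟨j, a⟩), γ j'))
    (hγ0 : γ0 = 1 + ∑ j ∈ Finset.univ.filter (fun j : J => p j = none), γ j) :
    ∃ y : Option ((j : J) × A j) → ℝ, (∀ σ, 0 ≤ y σ) ∧ y none = 1 ∧
      (∀ j : J, ∑ a : A j, y (some ⟨j, a⟩) = y (p j)) ∧ (∑ σ, |y σ|) = γ0 := by
  classical
  -- greedy action choice
  have hcex : ∀ j : J, ∃ a : A j,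
      ∑ j' ∈ Finset.univ.filter (fun j' => p j' = some ⟨j, a⟩), γ j' = γ j - 1 := by
    intro j
    obtain ⟨a, -, ha⟩ := Finset.exists_mem_eq_sup'
      (Finset.univ_nonempty (α := A j))
      (fun a : A j => ∑ j' ∈ Finset.univ.filter (fun j' => p j' = some ⟨j, a⟩), γ j')
    exact ⟨a, by rw [← ha, hγ j]; ring⟩
  choose c hc using hcex
  -- reach indicator, by recursion on the parent relation
  have hflip := dge_flip_wf p hwf
  obtain ⟨Y, hY⟩ : ∃ Y : J → ℝ, ∀ j, Y j = (match p j with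
      | none => 1
      | some pa => if pa.2 = c pa.1 then Y pa.1 else 0) := by
    refine ⟨hflip.fix (fun j ih =>
      match h : p j with
      | none => 1
      | some pa => if pa.2 = c pa.1 then ih pa.1 ⟨pa.2, by rw [h]⟩ else 0), fun j => ?_⟩
    rw [WellFounded.fix_eq]
    rcases hpj : p j with _ | pa
    · split
      · rfl
      · rename_i pa h; cases h
    · split
      · rename_i h; cases h
      · rename_i pa' h
        injection h with h2
        subst h2
        rfl
  have hY01 : ∀ j, Y j = 0 ∨ Y j = 1 := by
    intro j
    induction j using WellFounded.induction hflip with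
    | _ j ih =>
      rw [hY j]
      rcases hpj : p j with _ | pa
      · exact Or.inr rfl
      · by_cases hca : pa.2 = c pa.1
        · simp only [hca, if_pos rfl]
          exact ih pa.1 ⟨pa.2, by rw [hpj]⟩
        · simp [hca]
  have hY0 : ∀ j, 0 ≤ Y j := fun j => by rcases hY01 j with h | h <;> rw [h] <;> norm_num
  have hYroot : ∀ j, p j = none → Y j = 1 := by
    intro j hj; rw [hY j, hj]
  -- the strategy
  set y : Option ((j : J) × A j) → ℝ := fun σ => (match σ with
      | none => 1
      | some pa => if pa.2 = c pa.1 then Y pa.1 else 0) with hy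
  have hyp : ∀ j, y (p j) = Y j := by
    intro j
    rcases hpj : p j with _ | pa <;> rw [hY j, hpj] <;> try rfl
  have hy0 : ∀ σ, 0 ≤ y σ := by
    intro σ
    rw [hy]
    rcases σ with _ | pa
    · norm_num
    · by_cases hca : pa.2 = c pa.1 <;> simp [hca, hY0]
  have hysum : ∀ j : J, ∑ a : A j, y (some ⟨j, a⟩) = y (p j) := by
    intro j
    rw [hyp j]
    have : ∀ a : A j, y (some ⟨j, a⟩) = if a = c j then Y j else 0 := fun a => rfl
    simp only [this]
    rw [Finset.sum_ite_eq' Finset.univ (c j) (fun _ => Y j)]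
    simp
  -- total reach mass
  have hkey : ∀ j : J, ∑ a : A j,
      ∑ j' ∈ Finset.univ.filter (fun j' => p j' = some ⟨j, a⟩), γ j' * Y j'
        = (γ j - 1) * Y j := by
    intro j
    have inner : ∀ a : A j,
        ∑ j' ∈ Finset.univ.filter (fun j' => p j' = some ⟨j, a⟩), γ j' * Y j'
          = if a = c j then (∑ j' ∈ Finset.univ.filter (fun j' => p j' = some ⟨j, a⟩), γ j') * Y j
            else 0 := by
      intro a
      have hterm : ∀ j' ∈ Finset.univ.filter (fun j' => p j' = some ⟨j, a⟩),
          γ j' * Y j' = γ j' * (if a = c j then Y j else 0) := by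
        intro j' hj'
        have hpj' := (Finset.mem_filter.mp hj').2
        rw [hY j', hpj']
      rw [Finset.sum_congr rfl hterm]
      by_cases hca : a = c j
      · simp only [if_pos hca, ← Finset.sum_mul]
      · simp [hca]
    rw [Finset.sum_congr rfl (fun a _ => inner a),
      Finset.sum_ite_eq' Finset.univ (c j)
        (fun a => (∑ j' ∈ Finset.univ.filter (fun j' => p j' = some ⟨j, a⟩), γ j') * Y j)]
    simp [hc j]
  have hpart := dge_sum_partition p (fun j => γ j * Y j)
  have hroots : ∑ j' ∈ Finset.univ.filter (fun j' : J => p j' = none), γ j' * Y j'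
      = γ0 - 1 := by
    rw [hγ0]
    have : ∀ j' ∈ Finset.univ.filter (fun j' : J => p j' = none),
        γ j' * Y j' = γ j' := by
      intro j' hj'
      rw [hYroot j' (Finset.mem_filter.mp hj').2, mul_one]
    rw [Finset.sum_congr rfl this]; ring
  rw [hroots, Finset.sum_congr rfl (fun j _ => hkey j)] at hpart
  -- hpart : ∑ j, γ j * Y j = (γ0 - 1) + ∑ j, (γ j - 1) * Y j
  have hYsum : ∑ j, Y j = γ0 - 1 := by
    have expand : ∑ j : J, (γ j - 1) * Y j = ∑ j : J, γ j * Y j - ∑ j : J, Y j := by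
      rw [← Finset.sum_sub_distrib]
      exact Finset.sum_congr rfl fun j _ => by ring
    rw [expand] at hpart
    linarith
  refine ⟨y, hy0, rfl, hysum, ?_⟩
  have habs : ∀ σ, |y σ| = y σ := fun σ => abs_of_nonneg (hy0 σ)
  rw [Finset.sum_congr rfl (fun σ _ => habs σ), Fintype.sum_option,
    ← Finset.univ_sigma_univ, Finset.sum_sigma]
  have : ∀ j : J, ∑ a : A j, y (some ⟨j, a⟩) = Y j := fun j => by rw [hysum j, hyp j]
  rw [Finset.sum_congr rfl (fun j _ => this j), hYsum]
  ring
end Aux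
/-- Sum of squares is at most square of sum, for nonnegative reals. -/
lemma dge_sum_sq_le {ι : Type} {s : Finset ι} {f : ι → ℝ} (h : ∀ i ∈ s, 0 ≤ f i) :
    ∑ i ∈ s, (f i) ^ 2 ≤ (∑ i ∈ s, f i) ^ 2 := by
  calc ∑ i ∈ s, (f i) ^ 2 ≤ ∑ i ∈ s, f i * (∑ k ∈ s, f k) := by
        refine Finset.sum_le_sum fun i hi => ?_
        have h1 := Finset.single_le_sum h hi
        nlinarith [h i hi]
    _ = (∑ i ∈ s, f i) ^ 2 := by rw [← Finset.sum_mul]; ring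

section Aux2

variable {J : Type} [Fintype J] [DecidableEq J]
  {A : J → Type} [∀ j, Fintype (A j)] [∀ j, DecidableEq (A j)] [∀ j, Nonempty (A j)]

/-- Key weighted mass bound. -/
lemma dge_mass_bound (p : J → Option ((j : J) × A j))
    (hwf : WellFounded (fun j' j : J => ∃ a : A j, p j' = some ⟨j, a⟩))
    (γ : J → ℝ) (γ0 : ℝ)
    (hγ : ∀ j : J, γ j = 1 + (Finset.univ : Finset (A j)).sup' Finset.univ_nonempty
        (fun a => ∑ j' ∈ Finset.univ.filter (fun j' => p j' = some ⟨j, a⟩), γ j'))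
    (hγ0 : γ0 = 1 + ∑ j ∈ Finset.univ.filter (fun j : J => p j = none), γ j)
    (x : Option ((j : J) × A j) → ℝ) (hx0 : ∀ σ, 0 ≤ x σ) (hx1 : x none = 1)
    (hxs : ∀ j : J, ∑ a : A j, x (some ⟨j, a⟩) = x (p j)) :
    ∑ j, γ j * x (p j) ≤ (γ0 - 1) ^ 2 := by
  classical
  have hγ1 := dge_gamma_ge_one p hwf γ hγ
  have hγnn : ∀ j, 0 ≤ γ j := fun j => le_trans zero_le_one (hγ1 j)
  have hchild : ∀ (j : J) (a : A j),
      ∑ j' ∈ Finset.univ.filter (fun j' => p j' = some ⟨j, a⟩), γ j' ≤ γ j - 1 := by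
    intro j a
    have := Finset.le_sup' (f := fun a : A j =>
      ∑ j' ∈ Finset.univ.filter (fun j' => p j' = some ⟨j, a⟩), γ j') (Finset.mem_univ a)
    rw [hγ j]; linarith
  have hpart := dge_sum_partition p (fun j => (γ j) ^ 2 * x (p j))
  have hroots : ∑ j' ∈ Finset.univ.filter (fun j' : J => p j' = none), (γ j') ^ 2 * x (p j')
      = ∑ j' ∈ Finset.univ.filter (fun j' : J => p j' = none), (γ j') ^ 2 := by
    refine Finset.sum_congr rfl fun j' hj' => ?_
    rw [(Finset.mem_filter.mp hj').2, hx1, mul_one]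
  have hinner : ∀ (j : J) (a : A j),
      ∑ j' ∈ Finset.univ.filter (fun j' => p j' = some ⟨j, a⟩), (γ j') ^ 2 * x (p j')
        = (∑ j' ∈ Finset.univ.filter (fun j' => p j' = some ⟨j, a⟩), (γ j') ^ 2)
            * x (some ⟨j, a⟩) := by
    intro j a
    rw [Finset.sum_mul]
    refine Finset.sum_congr rfl fun j' hj' => ?_
    rw [(Finset.mem_filter.mp hj').2]
  rw [hroots] at hpart
  have step1 : ∑ j, γ j * x (p j) ≤ ∑ j, (2 * γ j - 1) * x (p j) := by
    refine Finset.sum_le_sum fun j _ => ?_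
    have := hγ1 j; have := hx0 (p j); nlinarith
  have step2 : ∑ j : J, (2 * γ j - 1) * x (p j)
      = ∑ j : J, (γ j) ^ 2 * x (p j) - ∑ j : J, (γ j - 1) ^ 2 * x (p j) := by
    rw [← Finset.sum_sub_distrib]
    exact Finset.sum_congr rfl fun j _ => by ring
  have step3 : ∑ j : J, ∑ a : A j,
      ∑ j' ∈ Finset.univ.filter (fun j' => p j' = some ⟨j, a⟩), (γ j') ^ 2 * x (p j')
        ≤ ∑ j : J, (γ j - 1) ^ 2 * x (p j) := by
    refine Finset.sum_le_sum fun j _ => ?_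
    calc ∑ a : A j,
        ∑ j' ∈ Finset.univ.filter (fun j' => p j' = some ⟨j, a⟩), (γ j') ^ 2 * x (p j')
        = ∑ a : A j, (∑ j' ∈ Finset.univ.filter (fun j' => p j' = some ⟨j, a⟩), (γ j') ^ 2)
            * x (some ⟨j, a⟩) := Finset.sum_congr rfl fun a _ => hinner j a
      _ ≤ ∑ a : A j, (γ j - 1) ^ 2 * x (some ⟨j, a⟩) := by
          refine Finset.sum_le_sum fun a _ => ?_
          refine mul_le_mul_of_nonneg_right ?_ (hx0 _)
          calc ∑ j' ∈ Finset.univ.filter (fun j' => p j' = some ⟨j, a⟩), (γ j') ^ 2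
              ≤ (∑ j' ∈ Finset.univ.filter (fun j' => p j' = some ⟨j, a⟩), γ j') ^ 2 :=
                dge_sum_sq_le (fun j' _ => hγnn j')
            _ ≤ (γ j - 1) ^ 2 := by
                have h1 := hchild j a
                have h2 : 0 ≤ ∑ j' ∈ Finset.univ.filter (fun j' => p j' = some ⟨j, a⟩), γ j' :=
                  Finset.sum_nonneg fun j' _ => hγnn j'
                nlinarith
      _ = (γ j - 1) ^ 2 * x (p j) := by rw [← Finset.mul_sum, hxs j]
  have step4 : ∑ j' ∈ Finset.univ.filter (fun j' : J => p j' = none), (γ j') ^ 2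
      ≤ (γ0 - 1) ^ 2 := by
    have := dge_sum_sq_le (s := Finset.univ.filter (fun j' : J => p j' = none))
      (f := γ) (fun j' _ => hγnn j')
    rw [hγ0]; ring_nf; ring_nf at this; linarith
  linarith

end Aux2
section Aux3

variable {J : Type} [Fintype J] [DecidableEq J]
  {A : J → Type} [∀ j, Fintype (A j)] [∀ j, DecidableEq (A j)] [∀ j, Nonempty (A j)]

/-- The dilatable global entropy as a sum of dilated per-decision-point entropies. -/
lemma dge_phi_eq (p : J → Option ((j : J) × A j))
    (γ : J → ℝ) (w : Option ((j : J) × A j) → ℝ)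
    (hw : ∀ (j : J) (a : A j),
      w (some ⟨j, a⟩) = γ j - ∑ j' ∈ Finset.univ.filter (fun j' => p j' = some ⟨j, a⟩), γ j')
    (x : Option ((j : J) × A j) → ℝ) (hx1 : x none = 1) :
    w none * (x none * Real.log (x none))
      + (∑ j : J, ∑ a : A j, w (some ⟨j, a⟩) * (x (some ⟨j, a⟩) * Real.log (x (some ⟨j, a⟩))))
      + (∑ j : J, γ j * (x (p j) * Real.log ((Fintype.card (A j) : ℝ))))
    = ∑ j : J, γ j * (x (p j) * Real.log ((Fintype.card (A j) : ℝ))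
        + (∑ a : A j, x (some ⟨j, a⟩) * Real.log (x (some ⟨j, a⟩)))
        - x (p j) * Real.log (x (p j))) := by
  classical
  have hA1 : w none * (x none * Real.log (x none)) = 0 := by
    rw [hx1, Real.log_one]; ring
  have hpart := dge_sum_partition p (fun j => γ j * (x (p j) * Real.log (x (p j))))
  have hroots : ∑ j' ∈ Finset.univ.filter (fun j' : J => p j' = none),
      γ j' * (x (p j') * Real.log (x (p j'))) = 0 := by
    refine Finset.sum_eq_zero fun j' hj' => ?_
    rw [(Finset.mem_filter.mp hj').2, hx1, Real.log_one]; ring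
  have hinner : ∀ (j : J) (a : A j),
      ∑ j' ∈ Finset.univ.filter (fun j' => p j' = some ⟨j, a⟩),
        γ j' * (x (p j') * Real.log (x (p j')))
      = (∑ j' ∈ Finset.univ.filter (fun j' => p j' = some ⟨j, a⟩), γ j')
          * (x (some ⟨j, a⟩) * Real.log (x (some ⟨j, a⟩))) := by
    intro j a
    rw [Finset.sum_mul]
    refine Finset.sum_congr rfl fun j' hj' => ?_
    rw [(Finset.mem_filter.mp hj').2]
  rw [hroots, Finset.sum_congr rfl
    (fun j _ => Finset.sum_congr rfl (fun a (_ : a ∈ Finset.univ) => hinner j a)),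
    zero_add] at hpart
  -- hpart : ∑ j, γ j * (x (p j) * log (x (p j))) = ∑ j, ∑ a, S(j,a) * (x_{ja} log x_{ja})
  have hA2 : ∑ j : J, ∑ a : A j, w (some ⟨j, a⟩) * (x (some ⟨j, a⟩) * Real.log (x (some ⟨j, a⟩)))
      = (∑ j : J, γ j * (∑ a : A j, x (some ⟨j, a⟩) * Real.log (x (some ⟨j, a⟩))))
        - ∑ j : J, γ j * (x (p j) * Real.log (x (p j))) := by
    rw [hpart, ← Finset.sum_sub_distrib]
    refine Finset.sum_congr rfl fun j _ => ?_
    rw [Finset.mul_sum, ← Finset.sum_sub_distrib]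
    refine Finset.sum_congr rfl fun a _ => ?_
    rw [hw j a]; ring
  rw [hA1, hA2, zero_add, sub_add_eq_add_sub, ← Finset.sum_add_distrib,
    ← Finset.sum_sub_distrib]
  refine Finset.sum_congr rfl fun j _ => ?_
  ring

end Aux3
/-- **Diameter bound.** Assuming `J` nonempty, for every `x ∈ Q` the dilatable global entropy
satisfies `0 ≤ φ̃ x ≤ M_Q² · max_{j∈J} log |A j|`, where `M_Q = max_{x∈Q} ‖x‖₁`.
Consequently the `φ̃`-range of `Q` is at most `M_Q² · max_{j∈J} log |A j|`. -/
theorem dge_diameter_bound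
    {J : Type} [Fintype J] [DecidableEq J] [Nonempty J]
    {A : J → Type} [∀ j, Fintype (A j)] [∀ j, DecidableEq (A j)] [∀ j, Nonempty (A j)]
    (p : J → Option ((j : J) × A j))
    (hwf : WellFounded (fun j' j : J => ∃ a : A j, p j' = some ⟨j, a⟩))
    (γ : J → ℝ) (γ0 : ℝ)
    (hγ : ∀ j : J, γ j = 1 + (Finset.univ : Finset (A j)).sup' Finset.univ_nonempty
        (fun a => ∑ j' ∈ Finset.univ.filter (fun j' => p j' = some ⟨j, a⟩), γ j'))
    (hγ0 : γ0 = 1 + ∑ j ∈ Finset.univ.filter (fun j : J => p j = none), γ j)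
    (w : Option ((j : J) × A j) → ℝ)
    (hw0 : w none = γ0 - ∑ j ∈ Finset.univ.filter (fun j : J => p j = none), γ j)
    (hw : ∀ (j : J) (a : A j),
      w (some ⟨j, a⟩) = γ j - ∑ j' ∈ Finset.univ.filter (fun j' => p j' = some ⟨j, a⟩), γ j')
    (Q : Set (Option ((j : J) × A j) → ℝ))
    (hQ : Q = {x | (∀ σ, 0 ≤ x σ) ∧ x none = 1 ∧
        ∀ j : J, ∑ a : A j, x (some ⟨j, a⟩) = x (p j)})
    (M : ℝ)
    (hM : IsGreatest ((fun x : Option ((j : J) × A j) → ℝ => ∑ σ, |x σ|) '' Q) M)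
    (φ : (Option ((j : J) × A j) → ℝ) → ℝ)
    (hφ : φ = fun x => w none * (x none * Real.log (x none))
      + (∑ j : J, ∑ a : A j, w (some ⟨j, a⟩) * (x (some ⟨j, a⟩) * Real.log (x (some ⟨j, a⟩))))
      + (∑ j : J, γ j * (x (p j) * Real.log ((Fintype.card (A j) : ℝ))))) :
    (∀ x ∈ Q, 0 ≤ φ x ∧
      φ x ≤ M ^ 2 * (Finset.univ : Finset J).sup' Finset.univ_nonempty
        (fun j => Real.log ((Fintype.card (A j) : ℝ)))) ∧
    (∀ x ∈ Q, ∀ y ∈ Q,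
      φ x - φ y ≤ M ^ 2 * (Finset.univ : Finset J).sup' Finset.univ_nonempty
        (fun j => Real.log ((Fintype.card (A j) : ℝ)))) := by
  classical
  set L : ℝ := (Finset.univ : Finset J).sup' Finset.univ_nonempty
    (fun j => Real.log ((Fintype.card (A j) : ℝ))) with hL
  have hγ1 := dge_gamma_ge_one p hwf γ hγ
  have hγ0ge : 1 ≤ γ0 := by
    rw [hγ0]
    have : 0 ≤ ∑ j ∈ Finset.univ.filter (fun j : J => p j = none), γ j :=
      Finset.sum_nonneg fun j _ => le_trans zero_le_one (hγ1 j)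
    linarith
  -- L is nonnegative
  have hLlog : ∀ j : J, Real.log ((Fintype.card (A j) : ℝ)) ≤ L := by
    intro j
    rw [hL]
    exact Finset.le_sup' (fun j => Real.log ((Fintype.card (A j) : ℝ))) (Finset.mem_univ j)
  have hL0 : 0 ≤ L := by
    refine le_trans ?_ (hLlog (Classical.arbitrary J))
    refine Real.log_nonneg ?_
    have := Fintype.card_pos (α := A (Classical.arbitrary J))
    exact_mod_cast this
  -- M is at least γ0
  have hMγ0 : γ0 ≤ M := by
    obtain ⟨y, hy0, hy1, hys, hynorm⟩ := dge_exists_greedy p hwf γ γ0 hγ hγ0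
    have hyQ : y ∈ Q := by rw [hQ]; exact ⟨hy0, hy1, hys⟩
    have hle : (∑ σ, |y σ|) ≤ M := hM.2 ⟨y, hyQ, rfl⟩
    rw [hynorm] at hle
    exact hle
  -- main upper/lower bounds
  have main : ∀ x ∈ Q, 0 ≤ φ x ∧ φ x ≤ M ^ 2 * L := by
    intro x hx
    rw [hQ] at hx
    obtain ⟨hx0, hx1, hxs⟩ := hx
    have hphi : φ x = ∑ j : J, γ j * (x (p j) * Real.log ((Fintype.card (A j) : ℝ))
        + (∑ a : A j, x (some ⟨j, a⟩) * Real.log (x (some ⟨j, a⟩)))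
        - x (p j) * Real.log (x (p j))) := by
      rw [hφ]
      exact dge_phi_eq p γ w hw x hx1
    constructor
    · rw [hphi]
      refine Finset.sum_nonneg fun j _ => ?_
      refine mul_nonneg (le_trans zero_le_one (hγ1 j)) ?_
      have := dge_entropy_lower (fun a : A j => x (some ⟨j, a⟩)) (fun a => hx0 _)
      rw [hxs j] at this
      linarith
    · have hub : φ x ≤ ∑ j : J, γ j * (x (p j) * Real.log ((Fintype.card (A j) : ℝ))) := by
        rw [hphi]
        refine Finset.sum_le_sum fun j _ => ?_
        refine mul_le_mul_of_nonneg_left ?_ (le_trans zero_le_one (hγ1 j))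
        have := dge_entropy_upper (fun a : A j => x (some ⟨j, a⟩)) (fun a => hx0 _)
        rw [hxs j] at this
        linarith
      have hub2 : ∑ j : J, γ j * (x (p j) * Real.log ((Fintype.card (A j) : ℝ)))
          ≤ (∑ j : J, γ j * x (p j)) * L := by
        rw [Finset.sum_mul]
        refine Finset.sum_le_sum fun j _ => ?_
        have hnn : 0 ≤ γ j * x (p j) :=
          mul_nonneg (le_trans zero_le_one (hγ1 j)) (hx0 _)
        calc γ j * (x (p j) * Real.log ((Fintype.card (A j) : ℝ)))
            = (γ j * x (p j)) * Real.log ((Fintype.card (A j) : ℝ)) := by ring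
          _ ≤ (γ j * x (p j)) * L := mul_le_mul_of_nonneg_left (hLlog j) hnn
      have hmass := dge_mass_bound p hwf γ γ0 hγ hγ0 x hx0 hx1 hxs
      have hsq : (γ0 - 1) ^ 2 ≤ M ^ 2 := by nlinarith
      have : (∑ j : J, γ j * x (p j)) * L ≤ M ^ 2 * L := by
        refine mul_le_mul_of_nonneg_right ?_ hL0
        calc ∑ j : J, γ j * x (p j) ≤ (γ0 - 1) ^ 2 := hmass
          _ ≤ M ^ 2 := hsq
      linarith
  refine ⟨main, fun x hx y hy => ?_⟩
  have h1 := (main x hx).2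
  have h2 := (main y hy).1
  linarith
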